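/- Define, for sub-probability measures m, n with m(𝕋^d) ≤ n(𝕋^d), ρ(m,n) = n(𝕋^d) − m(𝕋^d) + inf{ d(m, n') : n' ≤ n, n'(𝕋^d) = m(𝕋^d) } (and symmetrically otherwise). Then for all m, n ∈ P_sub: d(m,n) ≤ ρ(m,n) ≤ 3 d(m,n). -/

import Mathlib

open MeasureTheory
open scoped ENNReal NNReal Classical

/-- The `d`-dimensional flat torus. -/
abbrev Torus (d : ℕ) := Fin d → AddCircle (1 : ℝ)

/-- `f` is an admissible test function: `‖f‖_∞ + ‖Df‖_∞ ≤ 1`, encoded via a sup-norm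
bound `a` and a Lipschitz constant `b` with `a + b ≤ 1`. -/
def TestFn {α : Type*} [PseudoMetricSpace α] (f : α → ℝ) : Prop :=
  ∃ a b : ℝ≥0, (a : ℝ) + b ≤ 1 ∧ (∀ x, |f x| ≤ a) ∧ LipschitzWith b f

/-- The bounded-Lipschitz dual distance `d(m,n) = sup_{‖f‖_{W^{1,∞}} ≤ 1} ∫ f d(m−n)`. -/
noncomputable def BLdist {α : Type*} [MeasurableSpace α] [PseudoMetricSpace α]
    (m n : Measure α) : ℝ :=
  sSup {r | ∃ f : α → ℝ, TestFn f ∧ r = (∫ x, f x ∂m) - ∫ x, f x ∂n}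

/-- A sub-probability measure: total mass at most one. -/
def IsSubProb {α : Type*} [MeasurableSpace α] (m : Measure α) : Prop := m Set.univ ≤ 1

/-- The distance `ρ`: the difference of masses plus the infimal `BLdist` to a
sub-measure of the bigger measure having the same mass as the smaller one. -/
noncomputable def rho {d : ℕ} (m n : Measure (Torus d)) : ℝ :=
  if m Set.univ ≤ n Set.univ then
    (n Set.univ).toReal - (m Set.univ).toReal +
      sInf {r | ∃ n' : Measure (Torus d),
        n' ≤ n ∧ n' Set.univ = m Set.univ ∧ r = BLdist m n'}
  else
    (m Set.univ).toReal - (n Set.univ).toReal +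
      sInf {r | ∃ m' : Measure (Torus d),
        m' ≤ m ∧ m' Set.univ = n Set.univ ∧ r = BLdist m' n}

/-! ### Auxiliary lemmas -/

instance : Fact ((0:ℝ) < 1) := ⟨one_pos⟩

section Aux

variable {α : Type*} [PseudoMetricSpace α]

lemma testFn_zero : TestFn (fun _ : α => (0:ℝ)) :=
  ⟨0, 0, by norm_num, fun x => by norm_num, LipschitzWith.const' 0⟩

lemma testFn_neg_one : TestFn (fun _ : α => (-1:ℝ)) :=
  ⟨1, 0, by norm_num, fun x => by norm_num, LipschitzWith.const' (-1)⟩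

lemma testFn_abs_le_one {f : α → ℝ} (hf : TestFn f) (x : α) : |f x| ≤ 1 := by
  obtain ⟨a, b, hab, ha, -⟩ := hf
  exact (ha x).trans (le_trans (le_add_of_nonneg_right b.coe_nonneg) hab)

lemma testFn_neg {f : α → ℝ} (hf : TestFn f) : TestFn (fun x => - f x) := by
  obtain ⟨a, b, hab, ha, hl⟩ := hf
  exact ⟨a, b, hab, fun x => by simpa using ha x, hl.neg⟩

variable {d : ℕ}

lemma testFn_integrable {f : Torus d → ℝ} (hf : TestFn f) (μ : Measure (Torus d))
    [IsFiniteMeasure μ] : Integrable f μ := by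
  obtain ⟨a, b, hab, ha, hl⟩ := hf
  exact (integrable_const (a : ℝ)).mono' hl.continuous.aestronglyMeasurable
    (Filter.Eventually.of_forall fun x => by simpa using ha x)

lemma abs_integral_le {f : Torus d → ℝ} (hf : TestFn f) (μ : Measure (Torus d))
    [IsFiniteMeasure μ] : |∫ x, f x ∂μ| ≤ (μ Set.univ).toReal := by
  have h := norm_integral_le_of_norm_le_const (μ := μ) (f := f) (C := 1)
    (Filter.Eventually.of_forall fun x => by simpa using testFn_abs_le_one hf x)
  simpa [measureReal_def] using h

/-- The defining set of `BLdist`. -/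
def BLset (m n : Measure (Torus d)) : Set ℝ :=
  {r | ∃ f : Torus d → ℝ, TestFn f ∧ r = (∫ x, f x ∂m) - ∫ x, f x ∂n}

lemma BLdist_eq (m n : Measure (Torus d)) : BLdist m n = sSup (BLset m n) := rfl

lemma BLset_nonempty (m n : Measure (Torus d)) : (BLset m n).Nonempty :=
  ⟨0, fun _ => 0, testFn_zero, by simp⟩

lemma BLset_bddAbove (m n : Measure (Torus d)) [IsFiniteMeasure m] [IsFiniteMeasure n] :
    BddAbove (BLset m n) := by
  refine ⟨(m Set.univ).toReal + (n Set.univ).toReal, ?_⟩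
  rintro r ⟨f, hf, rfl⟩
  have h1 := abs_integral_le hf m
  have h2 := abs_integral_le hf n
  have := abs_le.1 h1
  have := abs_le.1 h2
  linarith [(abs_le.1 h1).1, (abs_le.1 h1).2, (abs_le.1 h2).1, (abs_le.1 h2).2]

lemma le_BLdist {m n : Measure (Torus d)} [IsFiniteMeasure m] [IsFiniteMeasure n]
    {f : Torus d → ℝ} (hf : TestFn f) :
    (∫ x, f x ∂m) - ∫ x, f x ∂n ≤ BLdist m n :=
  le_csSup (BLset_bddAbove m n) ⟨f, hf, rfl⟩

lemma BLdist_nonneg (m n : Measure (Torus d)) [IsFiniteMeasure m] [IsFiniteMeasure n] :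
    0 ≤ BLdist m n := by
  have := le_BLdist (m := m) (n := n) (f := fun _ => 0) testFn_zero
  simpa using this

lemma BLdist_symm (m n : Measure (Torus d)) : BLdist m n = BLdist n m := by
  have key : ∀ m n : Measure (Torus d), BLset m n ⊆ BLset n m := by
    rintro m n r ⟨f, hf, rfl⟩
    refine ⟨fun x => - f x, testFn_neg hf, ?_⟩
    simp only [integral_neg]
    ring
  rw [BLdist_eq, BLdist_eq, Set.Subset.antisymm (key m n) (key n m)]

lemma BLdist_mass_le (m n : Measure (Torus d)) [IsFiniteMeasure m] [IsFiniteMeasure n] :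
    (n Set.univ).toReal - (m Set.univ).toReal ≤ BLdist m n := by
  have h := le_BLdist (m := m) (n := n) (f := fun _ => (-1:ℝ)) testFn_neg_one
  simp only [integral_const, smul_eq_mul] at h
  linarith [measureReal_def m Set.univ, measureReal_def n Set.univ]

lemma BLdist_triangle (m n k : Measure (Torus d))
    [IsFiniteMeasure m] [IsFiniteMeasure n] [IsFiniteMeasure k] :
    BLdist m k ≤ BLdist m n + BLdist n k := by
  rw [BLdist_eq m k]
  refine Real.sSup_le ?_ (add_nonneg (BLdist_nonneg m n) (BLdist_nonneg n k))
  rintro r ⟨f, hf, rfl⟩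
  have h1 := le_BLdist (m := m) (n := n) hf
  have h2 := le_BLdist (m := n) (n := k) hf
  linarith


lemma rho_main {d : ℕ} (m n : Measure (Torus d)) (hm : IsSubProb m) (hn : IsSubProb n)
    (hmn : m Set.univ ≤ n Set.univ) :
    BLdist m n ≤ (n Set.univ).toReal - (m Set.univ).toReal +
        sInf {r | ∃ n' : Measure (Torus d),
          n' ≤ n ∧ n' Set.univ = m Set.univ ∧ r = BLdist m n'} ∧
    (n Set.univ).toReal - (m Set.univ).toReal +
        sInf {r | ∃ n' : Measure (Torus d),
          n' ≤ n ∧ n' Set.univ = m Set.univ ∧ r = BLdist m n'} ≤ 3 * BLdist m n := by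
  haveI : IsFiniteMeasure m := ⟨lt_of_le_of_lt hm ENNReal.one_lt_top⟩
  haveI : IsFiniteMeasure n := ⟨lt_of_le_of_lt hn ENNReal.one_lt_top⟩
  set S : Set ℝ := {r | ∃ n' : Measure (Torus d),
      n' ≤ n ∧ n' Set.univ = m Set.univ ∧ r = BLdist m n'} with hS
  set nT := (n Set.univ).toReal with hnT
  set mT := (m Set.univ).toReal with hmT
  set c : ℝ≥0∞ := m Set.univ / n Set.univ with hc
  have hc1 : c ≤ 1 := by
    rcases eq_or_ne (n Set.univ) 0 with h0 | h0
    · have hm0 : m Set.univ = 0 := le_antisymm (h0 ▸ hmn) zero_le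
      simp [hc, hm0]
    · rw [hc, ENNReal.div_le_iff h0 (measure_ne_top n _), one_mul]; exact hmn
  set n₀ : Measure (Torus d) := c • n with hn₀
  have hn₀univ : n₀ Set.univ = m Set.univ := by
    rcases eq_or_ne (n Set.univ) 0 with h0 | h0
    · have hm0 : m Set.univ = 0 := le_antisymm (h0 ▸ hmn) zero_le
      simp [hn₀, Measure.smul_apply, h0, hm0]
    · simp only [hn₀, Measure.smul_apply, smul_eq_mul, hc]
      exact ENNReal.div_mul_cancel h0 (measure_ne_top n _)
  have hn₀le : n₀ ≤ n := by
    refine Measure.le_iff.2 fun s hs => ?_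
    simp only [hn₀, Measure.smul_apply, smul_eq_mul]
    calc c * n s ≤ 1 * n s := mul_le_mul_left hc1 _
    _ = n s := one_mul _
  haveI : IsFiniteMeasure n₀ := isFiniteMeasure_of_le n hn₀le
  have hmassle : nT - mT ≤ BLdist m n := BLdist_mass_le m n
  have hmass0 : 0 ≤ nT - mT :=
    sub_nonneg.2 (ENNReal.toReal_mono (measure_ne_top n _) hmn)
  have hSne : S.Nonempty := ⟨BLdist m n₀, n₀, hn₀le, hn₀univ, rfl⟩
  have hSlb : ∀ x ∈ S, (0:ℝ) ≤ x := by
    rintro x ⟨n', hle, huniv, rfl⟩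
    haveI : IsFiniteMeasure n' := isFiniteMeasure_of_le n hle
    exact BLdist_nonneg m n'
  have hSbdd : BddBelow S := ⟨0, hSlb⟩
  constructor
  · rw [BLdist_eq]
    refine Real.sSup_le ?_ (add_nonneg hmass0 (Real.sInf_nonneg hSlb))
    rintro r ⟨f, hf, rfl⟩
    have key : ∀ x ∈ S, ((∫ x, f x ∂m) - ∫ x, f x ∂n) - (nT - mT) ≤ x := by
      rintro x ⟨n', hle, huniv, rfl⟩
      haveI : IsFiniteMeasure n' := isFiniteMeasure_of_le n hle
      haveI : IsFiniteMeasure (n - n') := isFiniteMeasure_of_le n Measure.sub_le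
      have hsplit : ∫ x, f x ∂n = (∫ x, f x ∂(n - n')) + ∫ x, f x ∂n' := by
        conv_lhs => rw [← Measure.sub_add_cancel_of_le hle]
        exact integral_add_measure (testFn_integrable hf _) (testFn_integrable hf _)
      have habs : |∫ x, f x ∂(n - n')| ≤ ((n - n') Set.univ).toReal := abs_integral_le hf _
      have hsub : ((n - n') Set.univ).toReal = nT - mT := by
        rw [Measure.sub_apply MeasurableSet.univ hle,
          ENNReal.toReal_sub_of_le (Measure.le_iff'.1 hle Set.univ) (measure_ne_top n _), huniv]
      have h1 : (∫ x, f x ∂m) - ∫ x, f x ∂n' ≤ BLdist m n' := le_BLdist hf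
      have h2 := (abs_le.1 habs).1
      rw [hsub] at h2
      linarith
    have := le_csInf hSne key
    linarith
  · have htri := BLdist_triangle m n n₀
    have hcT : c.toReal * nT = mT := by
      rw [hnT, hmT, ← ENNReal.toReal_mul, ← hn₀univ, hn₀, Measure.smul_apply, smul_eq_mul]
    have hc1' : c.toReal ≤ 1 := by
      have := ENNReal.toReal_mono ENNReal.one_ne_top hc1
      simpa using this
    have hnn₀ : BLdist n n₀ ≤ nT - mT := by
      rw [BLdist_eq]
      refine Real.sSup_le ?_ hmass0
      rintro r ⟨f, hf, rfl⟩
      have heq : (∫ x, f x ∂n) - ∫ x, f x ∂n₀ = (1 - c.toReal) * ∫ x, f x ∂n := by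
        rw [hn₀, integral_smul_measure, smul_eq_mul]; ring
      have hIf : (∫ x, f x ∂n) ≤ nT := (abs_le.1 (abs_integral_le hf n)).2
      have h1c : (0:ℝ) ≤ 1 - c.toReal := by linarith
      have hmul : (1 - c.toReal) * (∫ x, f x ∂n) ≤ (1 - c.toReal) * nT :=
        mul_le_mul_of_nonneg_left hIf h1c
      rw [heq]
      nlinarith
    have h2 : sInf S ≤ BLdist m n₀ := csInf_le hSbdd ⟨n₀, hn₀le, hn₀univ, rfl⟩
    linarith

end Aux

/-- `d(m,n) ≤ ρ(m,n) ≤ 3 d(m,n)` for sub-probability measures. -/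
theorem BLdist_le_rho_le_three_mul (d : ℕ) (m n : Measure (Torus d))
    (hm : IsSubProb m) (hn : IsSubProb n) :
    BLdist m n ≤ rho m n ∧ rho m n ≤ 3 * BLdist m n := by
  by_cases hcase : m Set.univ ≤ n Set.univ
  · have h := rho_main m n hm hn hcase
    simpa only [rho, if_pos hcase] using h
  · have hcase' : n Set.univ ≤ m Set.univ := le_of_not_ge hcase
    have h := rho_main n m hn hm hcase'
    have hset : {r | ∃ m' : Measure (Torus d),
          m' ≤ m ∧ m' Set.univ = n Set.univ ∧ r = BLdist m' n}
        = {r | ∃ m' : Measure (Torus d),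
          m' ≤ m ∧ m' Set.univ = n Set.univ ∧ r = BLdist n m'} := by
      ext r
      constructor
      · rintro ⟨m', h1, h2, rfl⟩; exact ⟨m', h1, h2, BLdist_symm m' n⟩
      · rintro ⟨m', h1, h2, rfl⟩; exact ⟨m', h1, h2, BLdist_symm n m'⟩
    rw [BLdist_symm m n]
    simp only [rho, if_neg hcase, hset]
    exact h
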